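/- For all n ≥ 1, (ζ∗ζ)(1_n, γ_n) equals the n-th Catalan number C_n = (1/(n+1))·binom(2n,n), i.e., the number of factorizations of (1_n,γ_n) as a product of two disc partitioned permutations equals the number of non-crossing permutations of {1,…,n}. -/

import Mathlib

open Equiv

def orbitSetoid {α : Type*} (π : Equiv.Perm α) : Setoid α where
  r := π.SameCycle
  iseqv := ⟨fun x => Equiv.Perm.SameCycle.refl π x, fun h => h.symm, fun h h' => h.trans h'⟩

noncomputable def cycleCount {n : ℕ} (π : Equiv.Perm (Fin n)) : ℕ :=
  Nat.card (Quotient (orbitSetoid π))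

noncomputable def pLen {n : ℕ} (V : Setoid (Fin n)) : ℤ :=
  (n : ℤ) - Nat.card (Quotient V)

noncomputable def permLen {n : ℕ} (π : Equiv.Perm (Fin n)) : ℤ :=
  (n : ℤ) - cycleCount π

theorem orbitSetoid_mul_le {α : Type*} (π σ : Equiv.Perm α) :
    orbitSetoid (π * σ) ≤ orbitSetoid π ⊔ orbitSetoid σ := by
  set S := orbitSetoid π ⊔ orbitSetoid σ with hS
  have hstep : ∀ x, S x ((π * σ) x) := by
    intro x
    have h1 : S x (σ x) := Setoid.le_def.mp le_sup_right ⟨1, by simp⟩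
    have h2 : S (σ x) (π (σ x)) := Setoid.le_def.mp le_sup_left ⟨1, by simp⟩
    exact S.iseqv.trans h1 h2
  have hpow : ∀ (k : ℤ) (x : α), S x (((π * σ) ^ k) x) := by
    intro k
    induction k using Int.induction_on with
    | zero => intro x; simpa using S.iseqv.refl x
    | succ k ih =>
        intro x
        have h : ((π * σ) ^ ((k : ℤ) + 1)) x = ((π * σ) ^ (k : ℤ)) ((π * σ) x) := by
          rw [zpow_add_one]
          simp [Equiv.Perm.mul_apply]
        rw [h]
        exact S.iseqv.trans (hstep x) (ih ((π * σ) x))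
    | pred k ih =>
        intro x
        have h : ((π * σ) ^ (-(k : ℤ) - 1)) x = ((π * σ) ^ (-(k : ℤ))) ((π * σ)⁻¹ x) := by
          rw [zpow_sub_one]
          simp [Equiv.Perm.mul_apply]
        rw [h]
        have hinv : S x ((π * σ)⁻¹ x) := by
          have h2 := hstep ((π * σ)⁻¹ x)
          simp only [Equiv.Perm.inv_def, Equiv.apply_symm_apply] at h2
          exact S.iseqv.symm h2
        exact S.iseqv.trans hinv (ih ((π * σ)⁻¹ x))
  rw [Setoid.le_def]
  rintro x y ⟨k, hk⟩
  exact hk ▸ hpow k x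

section SetoidCount

variable {α : Type*} [Fintype α]

lemma quot_map_surj {A B : Setoid α} (h : A ≤ B) :
    Function.Surjective (Quotient.map' (id : α → α) (fun _ _ hxy => h hxy) :
      Quotient A → Quotient B) := by
  rintro ⟨x⟩
  exact ⟨Quotient.mk'' x, rfl⟩

lemma card_quot_le_of_le {A B : Setoid α} (h : A ≤ B) :
    Nat.card (Quotient B) ≤ Nat.card (Quotient A) :=
  Nat.card_le_card_of_surjective _ (quot_map_surj h)

lemma setoid_eq_of_le_of_card {A B : Setoid α} (h : A ≤ B)
    (hc : Nat.card (Quotient A) ≤ Nat.card (Quotient B)) : A = B := by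
  have hfA : Finite (Quotient A) := Quotient.finite A
  have hfB : Finite (Quotient B) := Quotient.finite B
  set f : Quotient A → Quotient B := Quotient.map' id (fun _ _ hxy => h hxy) with hf
  have hsurj := quot_map_surj h
  have hcard : Nat.card (Quotient A) = Nat.card (Quotient B) :=
    le_antisymm hc (Nat.card_le_card_of_surjective _ hsurj)
  have hinj : Function.Injective f := by
    cases nonempty_fintype (Quotient A)
    cases nonempty_fintype (Quotient B)
    rw [Nat.card_eq_fintype_card, Nat.card_eq_fintype_card] at hcard
    exact (Fintype.bijective_iff_surjective_and_card f).mpr ⟨hsurj, hcard⟩ |>.1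
  refine le_antisymm h (fun {x y} hxy => ?_)
  have : f (Quotient.mk'' x) = f (Quotient.mk'' y) := Quotient.sound' hxy
  exact Quotient.exact' (hinj this)

/-- The subspace of functions invariant under a setoid. -/
def invSub (S : Setoid α) : Submodule ℚ (α → ℚ) where
  carrier := {f | ∀ x y, S x y → f x = f y}
  add_mem' := fun hf hg x y hxy => by simp [hf x y hxy, hg x y hxy]
  zero_mem' := fun x y _ => rfl
  smul_mem' := fun c f hf x y hxy => by simp [hf x y hxy]

noncomputable def invSubEquiv (S : Setoid α) : invSub S ≃ₗ[ℚ] (Quotient S → ℚ) where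
  toFun f := Quotient.lift (f : α → ℚ) (fun a b hab => f.2 a b hab)
  map_add' f g := by funext q; induction q using Quotient.ind; rfl
  map_smul' c f := by funext q; induction q using Quotient.ind; rfl
  invFun g := ⟨fun x => g (Quotient.mk _ x), fun x y hxy => by
    simp [Quotient.sound hxy]⟩
  left_inv f := by ext x; rfl
  right_inv g := by funext q; induction q using Quotient.ind; rfl

lemma finrank_invSub (S : Setoid α) :
    Module.finrank ℚ (invSub S) = Nat.card (Quotient S) := by
  classical
  have : Fintype (Quotient S) := Quotient.fintype S
  rw [LinearEquiv.finrank_eq (invSubEquiv S), Module.finrank_pi, Nat.card_eq_fintype_card]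

lemma invSub_antitone {A B : Setoid α} (h : A ≤ B) : invSub B ≤ invSub A :=
  fun _ hf x y hxy => hf x y (h hxy)

lemma invSub_inf (A B : Setoid α) : invSub A ⊓ invSub B = invSub (A ⊔ B) := by
  refine le_antisymm ?_ (le_inf (invSub_antitone le_sup_left) (invSub_antitone le_sup_right))
  rintro f ⟨hfA, hfB⟩ x y hxy
  rw [Setoid.sup_eq_eqvGen] at hxy
  induction hxy with
  | rel a b hab => exact hab.elim (hfA a b) (hfB a b)
  | refl a => rfl
  | symm a b _ ih => exact ih.symm
  | trans a b c _ _ ih1 ih2 => exact ih1.trans ih2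

lemma card_quot_sup_bound (A B : Setoid α) :
    Nat.card (Quotient A) + Nat.card (Quotient B) ≤
      Fintype.card α + Nat.card (Quotient (A ⊔ B)) := by
  have h := Submodule.finrank_sup_add_finrank_inf_eq (invSub A) (invSub B)
  rw [invSub_inf, finrank_invSub, finrank_invSub, finrank_invSub] at h
  have h2 : Module.finrank ℚ ↥(invSub A ⊔ invSub B) ≤ Fintype.card α := by
    have := Submodule.finrank_le (invSub A ⊔ invSub B)
    rwa [Module.finrank_pi] at this
  omega

end SetoidCount
section Geo

open Equiv Equiv.Perm

/-- If every single step of `τ` stays within an `S`-class, then the orbit setoid of `τ`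
is finer than `S`. -/
lemma orbit_le_of_step {α : Type*} (S : Setoid α) (τ : Equiv.Perm α)
    (hstep : ∀ x, S x (τ x)) : orbitSetoid τ ≤ S := by
  have hpow : ∀ (k : ℤ) (x : α), S x ((τ ^ k) x) := by
    intro k
    induction k using Int.induction_on with
    | zero => intro x; simpa using S.iseqv.refl x
    | succ k ih =>
        intro x
        have h : (τ ^ ((k : ℤ) + 1)) x = (τ ^ (k : ℤ)) (τ x) := by
          rw [zpow_add_one]; simp [Equiv.Perm.mul_apply]
        rw [h]
        exact S.iseqv.trans (hstep x) (ih (τ x))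
    | pred k ih =>
        intro x
        have h : (τ ^ (-(k : ℤ) - 1)) x = (τ ^ (-(k : ℤ))) (τ⁻¹ x) := by
          rw [zpow_sub_one]; simp [Equiv.Perm.mul_apply]
        rw [h]
        have hinv : S x (τ⁻¹ x) := by
          have h2 := hstep (τ⁻¹ x)
          simp only [Equiv.Perm.inv_def, Equiv.apply_symm_apply] at h2
          exact S.iseqv.symm h2
        exact S.iseqv.trans hinv (ih (τ⁻¹ x))
  rw [Setoid.le_def]
  rintro x y ⟨k, hk⟩
  exact hk ▸ hpow k x

variable {α : Type*} [Fintype α]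

/-- Number of orbits of a permutation of an arbitrary finite type. -/
noncomputable def cS (π : Equiv.Perm α) : ℕ := Nat.card (Quotient (orbitSetoid π))

/-- Cayley length of a permutation of an arbitrary finite type. -/
noncomputable def lenS (π : Equiv.Perm α) : ℤ := (Fintype.card α : ℤ) - cS π

/-- `π` lies on a geodesic from `1` to `γ`. -/
def GeoS (γ π : Equiv.Perm α) : Prop := lenS π + lenS (π⁻¹ * γ) = lenS γ

lemma cS_mul_bound (π ρ : Equiv.Perm α) :
    cS π + cS ρ ≤ Fintype.card α + cS (π * ρ) := by
  have h1 := card_quot_sup_bound (orbitSetoid π) (orbitSetoid ρ)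
  have h2 := card_quot_le_of_le (orbitSetoid_mul_le π ρ)
  unfold cS
  omega

lemma lenS_mul_le (π ρ : Equiv.Perm α) : lenS (π * ρ) ≤ lenS π + lenS ρ := by
  have := cS_mul_bound π ρ
  unfold lenS
  push_cast
  omega

lemma lenS_geo_le (γ π : Equiv.Perm α) : lenS γ ≤ lenS π + lenS (π⁻¹ * γ) := by
  have := lenS_mul_le π (π⁻¹ * γ)
  rwa [mul_inv_cancel_left] at this

lemma orbit_sup_of_geo {π ρ : Equiv.Perm α} (h : lenS π + lenS ρ = lenS (π * ρ)) :
    orbitSetoid π ⊔ orbitSetoid ρ = orbitSetoid (π * ρ) := by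
  have h1 := card_quot_sup_bound (orbitSetoid π) (orbitSetoid ρ)
  have h2 := card_quot_le_of_le (orbitSetoid_mul_le π ρ)
  have hc : cS π + cS ρ = Fintype.card α + cS (π * ρ) := by
    unfold lenS at h; omega
  refine (setoid_eq_of_le_of_card (orbitSetoid_mul_le π ρ) ?_).symm
  unfold cS at hc
  omega

lemma GeoS.orbit_sup {γ π : Equiv.Perm α} (h : GeoS γ π) :
    orbitSetoid π ⊔ orbitSetoid (π⁻¹ * γ) = orbitSetoid γ := by
  have := orbit_sup_of_geo (π := π) (ρ := π⁻¹ * γ) (by rw [mul_inv_cancel_left]; exact h)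
  rwa [mul_inv_cancel_left] at this

lemma GeoS.orbit_le {γ π : Equiv.Perm α} (h : GeoS γ π) :
    orbitSetoid π ≤ orbitSetoid γ :=
  h.orbit_sup ▸ le_sup_left

end Geo
section Split

open Equiv Equiv.Perm

variable {α : Type*} [Fintype α] [DecidableEq α]

lemma not_sameCycle_of_fixed {π : Equiv.Perm α} {a b : α} (hfix : π a = a) (hab : a ≠ b) :
    ¬ π.SameCycle a b := by
  rintro ⟨k, hk⟩
  rw [Equiv.Perm.zpow_apply_eq_self_of_apply_eq_self hfix k] at hk
  exact hab hk

lemma sameCycle_of_apply {π : Equiv.Perm α} {a b : α} (h : π a = b) : π.SameCycle a b :=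
  ⟨1, by simpa using h⟩

lemma swap_zpow {a b : α} (k : ℤ) :
    (Equiv.swap a b) ^ k = 1 ∨ (Equiv.swap a b) ^ k = Equiv.swap a b := by
  induction k using Int.induction_on with
  | zero => left; rfl
  | succ k ih =>
      rcases ih with h | h
      · right; rw [zpow_add_one, h, one_mul]
      · left; rw [zpow_add_one, h, Equiv.swap_mul_self]
  | pred k ih =>
      rcases ih with h | h
      · right
        rw [zpow_sub_one, h]
        simp
      · left
        rw [zpow_sub_one, h]
        simp [Equiv.swap_inv, Equiv.swap_mul_self]

lemma sameCycle_swap_iff {a b x y : α} (hab : a ≠ b) :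
    (Equiv.swap a b).SameCycle x y ↔ x = y ∨ (x = a ∧ y = b) ∨ (x = b ∧ y = a) := by
  constructor
  · rintro ⟨k, hk⟩
    rcases swap_zpow (a := a) (b := b) k with h | h
    · left; rw [h] at hk; simpa using hk
    · rw [h] at hk
      by_cases hxa : x = a
      · right; left; exact ⟨hxa, by rw [← hk, hxa, Equiv.swap_apply_left]⟩
      · by_cases hxb : x = b
        · right; right; exact ⟨hxb, by rw [← hk, hxb, Equiv.swap_apply_right]⟩
        · left; rw [← hk, Equiv.swap_apply_of_ne_of_ne hxa hxb]
  · rintro (rfl | ⟨rfl, rfl⟩ | ⟨rfl, rfl⟩)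
    · exact Equiv.Perm.SameCycle.refl _ _
    · exact sameCycle_of_apply (by simp)
    · exact sameCycle_of_apply (by simp)

lemma cS_swap {a b : α} (hab : a ≠ b) : cS (Equiv.swap a b) = Fintype.card α - 1 := by
  classical
  have e : Quotient (orbitSetoid (Equiv.swap a b)) ≃ {x : α // x ≠ b} := by
    refine Equiv.symm (Equiv.ofBijective
      (fun x => Quotient.mk (orbitSetoid (Equiv.swap a b)) x.1) ⟨?_, ?_⟩)
    · rintro ⟨x, hx⟩ ⟨y, hy⟩ hxy
      have := Quotient.exact hxy
      rcases (sameCycle_swap_iff hab).mp this with h | ⟨h1, h2⟩ | ⟨h1, h2⟩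
      · exact Subtype.ext h
      · exact absurd h2 hy
      · exact absurd h1 hx
    · rintro ⟨y⟩
      by_cases hy : y = b
      · refine ⟨⟨a, hab⟩, Quotient.sound ?_⟩
        rw [hy]
        exact (sameCycle_swap_iff hab).mpr (Or.inr (Or.inl ⟨rfl, rfl⟩))
      · exact ⟨⟨y, hy⟩, rfl⟩
  rw [cS, Nat.card_congr e, Nat.card_eq_fintype_card, Fintype.card_subtype_compl,
    Fintype.card_subtype_eq]

lemma lenS_swap {a b : α} (hab : a ≠ b) : lenS (Equiv.swap a b) = 1 := by
  have h1 : 1 ≤ Fintype.card α := Fintype.card_pos_iff.mpr ⟨a⟩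
  rw [lenS, cS_swap hab]
  push_cast [Nat.cast_sub h1]
  ring

lemma card_quot_lt {A B : Setoid α} (h : A ≤ B) {a b : α} (hA : ¬ A a b) (hB : B a b) :
    Nat.card (Quotient B) < Nat.card (Quotient A) := by
  classical
  have : Fintype (Quotient A) := Quotient.fintype A
  have : Fintype (Quotient B) := Quotient.fintype B
  rw [Nat.card_eq_fintype_card, Nat.card_eq_fintype_card]
  refine Fintype.card_lt_of_surjective_not_injective _ (quot_map_surj h) (fun hinj => hA ?_)
  have : (Quotient.map' (id : α → α) (fun _ _ hxy => h hxy) : Quotient A → Quotient B)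
      (Quotient.mk'' a) = Quotient.map' id (fun _ _ hxy => h hxy) (Quotient.mk'' b) :=
    Quotient.sound' hB
  exact Quotient.exact' (hinj this)

/-- The split lemma: multiplying on the left by `swap a b`, where `π a = b`, cuts the
cycle of `a` into two, increasing the number of orbits by exactly one. -/
lemma cS_swap_mul {π : Equiv.Perm α} {a b : α} (hab : a ≠ b) (hπ : π a = b) :
    cS (Equiv.swap a b * π) = cS π + 1 := by
  set π' := Equiv.swap a b * π with hπ'
  have hfix : π' a = a := by
    rw [hπ', Equiv.Perm.mul_apply, hπ, Equiv.swap_apply_right]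
  have hle : orbitSetoid π' ≤ orbitSetoid π := by
    refine orbit_le_of_step _ _ (fun x => ?_)
    show π.SameCycle x (π' x)
    have hx : π.SameCycle x (π x) := sameCycle_of_apply rfl
    rw [hπ', Equiv.Perm.mul_apply]
    by_cases h1 : π x = a
    · rw [h1, Equiv.swap_apply_left]
      exact hx.trans (h1 ▸ sameCycle_of_apply hπ)
    · by_cases h2 : π x = b
      · rw [h2, Equiv.swap_apply_right]
        exact hx.trans (h2 ▸ (sameCycle_of_apply hπ).symm)
      · rw [Equiv.swap_apply_of_ne_of_ne h1 h2]
        exact hx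
  have hlow : cS π < cS π' :=
    card_quot_lt hle (not_sameCycle_of_fixed hfix hab) (sameCycle_of_apply hπ)
  have hup : cS π' ≤ cS π + 1 := by
    have h1 : lenS π ≤ lenS (Equiv.swap a b) + lenS π' := by
      have := lenS_mul_le (Equiv.swap a b) π'
      rw [hπ', ← mul_assoc, Equiv.swap_mul_self, one_mul] at this
      exact this
    rw [lenS_swap hab] at h1
    unfold lenS at h1
    omega
  omega

end Split
section SumDecomp

open Equiv Equiv.Perm Sum

variable {α β : Type*}

lemma sumCongr_mul (p p' : Equiv.Perm α) (q q' : Equiv.Perm β) :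
    Equiv.sumCongr p q * Equiv.sumCongr p' q' = Equiv.sumCongr (p * p') (q * q') :=
  (Equiv.Perm.sumCongrHom α β).map_mul (p, q) (p', q') ▸ rfl

lemma sumCongr_zpow (p : Equiv.Perm α) (q : Equiv.Perm β) (k : ℤ) :
    (Equiv.sumCongr p q) ^ k = Equiv.sumCongr (p ^ k) (q ^ k) := by
  have h1 : Equiv.sumCongr p q = Equiv.Perm.sumCongrHom α β (p, q) := rfl
  have h2 : Equiv.sumCongr (p ^ k) (q ^ k) = Equiv.Perm.sumCongrHom α β ((p, q) ^ k) := rfl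
  rw [h1, h2, map_zpow]

lemma sameCycle_sumCongr_inl {p : Equiv.Perm α} {q : Equiv.Perm β} {a : α} {y : α ⊕ β}
    (h : Equiv.Perm.SameCycle (Equiv.sumCongr p q) (Sum.inl a) y) :
    ∃ c, y = Sum.inl c ∧ p.SameCycle a c := by
  obtain ⟨k, hk⟩ := h
  rw [sumCongr_zpow] at hk
  exact ⟨(p ^ k) a, hk.symm, ⟨k, rfl⟩⟩

lemma sameCycle_sumCongr_inr {p : Equiv.Perm α} {q : Equiv.Perm β} {b : β} {y : α ⊕ β}
    (h : Equiv.Perm.SameCycle (Equiv.sumCongr p q) (Sum.inr b) y) :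
    ∃ c, y = Sum.inr c ∧ q.SameCycle b c := by
  obtain ⟨k, hk⟩ := h
  rw [sumCongr_zpow] at hk
  exact ⟨(q ^ k) b, hk.symm, ⟨k, rfl⟩⟩

lemma sameCycle_inl {p : Equiv.Perm α} {q : Equiv.Perm β} {a c : α}
    (h : p.SameCycle a c) : Equiv.Perm.SameCycle (Equiv.sumCongr p q) (Sum.inl a) (Sum.inl c) := by
  obtain ⟨k, hk⟩ := h
  exact ⟨k, by rw [sumCongr_zpow]; simp [hk]⟩

lemma sameCycle_inr {p : Equiv.Perm α} {q : Equiv.Perm β} {b c : β}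
    (h : q.SameCycle b c) : Equiv.Perm.SameCycle (Equiv.sumCongr p q) (Sum.inr b) (Sum.inr c) := by
  obtain ⟨k, hk⟩ := h
  exact ⟨k, by rw [sumCongr_zpow]; simp [hk]⟩

noncomputable def quotSumEquiv (p : Equiv.Perm α) (q : Equiv.Perm β) :
    Quotient (orbitSetoid (Equiv.sumCongr p q)) ≃
      Quotient (orbitSetoid p) ⊕ Quotient (orbitSetoid q) where
  toFun := Quotient.lift
    (Sum.elim (fun a => Sum.inl (Quotient.mk (orbitSetoid p) a))
              (fun b => Sum.inr (Quotient.mk (orbitSetoid q) b)))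
    (by
      rintro (a | a) (b | b) h
      · obtain ⟨c, hc, hpc⟩ := sameCycle_sumCongr_inl h
        cases hc
        exact congrArg Sum.inl (Quotient.sound hpc)
      · obtain ⟨c, hc, _⟩ := sameCycle_sumCongr_inl h; exact absurd hc (by simp)
      · obtain ⟨c, hc, _⟩ := sameCycle_sumCongr_inr h; exact absurd hc (by simp)
      · obtain ⟨c, hc, hqc⟩ := sameCycle_sumCongr_inr h
        cases hc
        exact congrArg Sum.inr (Quotient.sound hqc))
  invFun := Sum.elim
    (Quotient.lift (fun a => Quotient.mk (orbitSetoid (Equiv.sumCongr p q)) (Sum.inl a))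
      (fun a b h => Quotient.sound (sameCycle_inl h)))
    (Quotient.lift (fun b => Quotient.mk (orbitSetoid (Equiv.sumCongr p q)) (Sum.inr b))
      (fun a b h => Quotient.sound (sameCycle_inr h)))
  left_inv := by
    rintro ⟨a | b⟩ <;> rfl
  right_inv := by
    rintro (a | b)
    · induction a using Quotient.ind; rfl
    · induction b using Quotient.ind; rfl

variable [Fintype α] [Fintype β]

lemma cS_sumCongr (p : Equiv.Perm α) (q : Equiv.Perm β) :
    cS (Equiv.sumCongr p q) = cS p + cS q := by
  rw [cS, Nat.card_congr (quotSumEquiv p q), Nat.card_sum]; rfl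

lemma lenS_sumCongr (p : Equiv.Perm α) (q : Equiv.Perm β) :
    lenS (Equiv.sumCongr p q) = lenS p + lenS q := by
  unfold lenS
  rw [cS_sumCongr, Fintype.card_sum]
  push_cast
  ring

/-- Decomposition of a side-preserving permutation of a sum type. -/
lemma sum_decomp (π : Equiv.Perm (α ⊕ β))
    (hL : ∀ a, ∃ c, π (Sum.inl a) = Sum.inl c) (hR : ∀ b, ∃ c, π (Sum.inr b) = Sum.inr c) :
    ∃ (p : Equiv.Perm α) (q : Equiv.Perm β), π = Equiv.sumCongr p q := by
  have hL' : ∀ a, ∃ c, π⁻¹ (Sum.inl a) = Sum.inl c := by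
    intro a
    rcases h : π⁻¹ (Sum.inl a) with c | c
    · exact ⟨c, rfl⟩
    · obtain ⟨d, hd⟩ := hR c
      rw [← h, Equiv.Perm.inv_def, Equiv.apply_symm_apply] at hd
      exact absurd hd (by simp)
  have hR' : ∀ b, ∃ c, π⁻¹ (Sum.inr b) = Sum.inr c := by
    intro b
    rcases h : π⁻¹ (Sum.inr b) with c | c
    · obtain ⟨d, hd⟩ := hL c
      rw [← h, Equiv.Perm.inv_def, Equiv.apply_symm_apply] at hd
      exact absurd hd (by simp)
    · exact ⟨c, rfl⟩
  refine ⟨⟨fun a => (π (Sum.inl a)).elim id (fun _ => a),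
           fun a => (π⁻¹ (Sum.inl a)).elim id (fun _ => a), ?_, ?_⟩,
          ⟨fun b => (π (Sum.inr b)).elim (fun _ => b) id,
           fun b => (π⁻¹ (Sum.inr b)).elim (fun _ => b) id, ?_, ?_⟩, ?_⟩
  · intro a
    obtain ⟨c, hc⟩ := hL a
    simp only [hc, Sum.elim_inl, id]
    have : π⁻¹ (Sum.inl c) = Sum.inl a := by rw [← hc, Equiv.Perm.inv_def, Equiv.symm_apply_apply]
    simp [this]
  · intro a
    obtain ⟨c, hc⟩ := hL' a
    simp only [hc, Sum.elim_inl, id]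
    have : π (Sum.inl c) = Sum.inl a := by rw [← hc, Equiv.Perm.inv_def, Equiv.apply_symm_apply]
    simp [this]
  · intro b
    obtain ⟨c, hc⟩ := hR b
    simp only [hc, Sum.elim_inr, id]
    have : π⁻¹ (Sum.inr c) = Sum.inr b := by rw [← hc, Equiv.Perm.inv_def, Equiv.symm_apply_apply]
    simp [this]
  · intro b
    obtain ⟨c, hc⟩ := hR' b
    simp only [hc, Sum.elim_inr, id]
    have : π (Sum.inr c) = Sum.inr b := by rw [← hc, Equiv.Perm.inv_def, Equiv.apply_symm_apply]
    simp [this]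
  · ext x
    rcases x with a | b
    · obtain ⟨c, hc⟩ := hL a
      simp [hc]
    · obtain ⟨c, hc⟩ := hR b
      simp [hc]

end SumDecomp
section CongrInv

open Equiv Equiv.Perm

variable {α β : Type*} [Fintype α] [Fintype β]

lemma permCongr_mul (e : α ≃ β) (p q : Equiv.Perm α) :
    e.permCongr p * e.permCongr q = e.permCongr (p * q) := by
  ext x; simp [Equiv.permCongr_apply, Equiv.Perm.mul_apply]

lemma permCongr_inv (e : α ≃ β) (p : Equiv.Perm α) :
    (e.permCongr p)⁻¹ = e.permCongr p⁻¹ := by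
  ext x
  rw [Equiv.permCongr_apply]
  apply (Equiv.symm_apply_eq _).mpr
  simp [Equiv.permCongr_apply]

lemma permCongr_zpow (e : α ≃ β) (p : Equiv.Perm α) (k : ℤ) :
    (e.permCongr p) ^ k = e.permCongr (p ^ k) := by
  induction k using Int.induction_on with
  | zero => ext x; simp [Equiv.permCongr_apply]
  | succ k ih => rw [zpow_add_one, zpow_add_one, ih, _root_.permCongr_mul]
  | pred k ih => rw [zpow_sub_one, zpow_sub_one, ih, permCongr_inv, _root_.permCongr_mul]

lemma sameCycle_permCongr {e : α ≃ β} {p : Equiv.Perm α} {x y : α} :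
    Equiv.Perm.SameCycle (e.permCongr p) (e x) (e y) ↔ p.SameCycle x y := by
  constructor
  · rintro ⟨k, hk⟩
    rw [permCongr_zpow, Equiv.permCongr_apply, Equiv.symm_apply_apply] at hk
    exact ⟨k, e.injective hk⟩
  · rintro ⟨k, hk⟩
    exact ⟨k, by rw [permCongr_zpow, Equiv.permCongr_apply, Equiv.symm_apply_apply, hk]⟩

lemma cS_permCongr (e : α ≃ β) (p : Equiv.Perm α) : cS (e.permCongr p) = cS p := by
  unfold cS
  exact (Nat.card_congr (Quotient.congr e (fun a b => sameCycle_permCongr.symm))).symm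

lemma lenS_permCongr (e : α ≃ β) (p : Equiv.Perm α) : lenS (e.permCongr p) = lenS p := by
  unfold lenS
  rw [cS_permCongr, Fintype.card_congr e]

lemma geoS_permCongr (e : α ≃ β) (γ p : Equiv.Perm α) :
    GeoS (e.permCongr γ) (e.permCongr p) ↔ GeoS γ p := by
  unfold GeoS
  rw [permCongr_inv, _root_.permCongr_mul, lenS_permCongr, lenS_permCongr, lenS_permCongr]

end CongrInv

section ProdLemma

open Equiv Equiv.Perm

variable {α β : Type*} [Fintype α] [Fintype β]

lemma sumCongr_inv (p : Equiv.Perm α) (q : Equiv.Perm β) :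
    (Equiv.sumCongr p q)⁻¹ = Equiv.sumCongr p⁻¹ q⁻¹ := by
  have := (Equiv.Perm.sumCongrHom α β).map_inv (p, q)
  exact this ▸ rfl

lemma geoS_sumCongr_iff (γ₁ : Equiv.Perm α) (γ₂ : Equiv.Perm β) (p : Equiv.Perm α)
    (q : Equiv.Perm β) :
    GeoS (Equiv.sumCongr γ₁ γ₂) (Equiv.sumCongr p q) ↔ GeoS γ₁ p ∧ GeoS γ₂ q := by
  have hrw : (Equiv.sumCongr p q)⁻¹ * Equiv.sumCongr γ₁ γ₂ =
      Equiv.sumCongr (p⁻¹ * γ₁) (q⁻¹ * γ₂) := by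
    rw [sumCongr_inv, _root_.sumCongr_mul]
  have h1 := lenS_geo_le γ₁ p
  have h2 := lenS_geo_le γ₂ q
  unfold GeoS
  rw [hrw, lenS_sumCongr, lenS_sumCongr, lenS_sumCongr]
  constructor
  · intro h
    exact ⟨by omega, by omega⟩
  · rintro ⟨ha, hb⟩
    omega

lemma card_geo_sum (γ₁ : Equiv.Perm α) (γ₂ : Equiv.Perm β) (a₀ : α) :
    Nat.card {π : Equiv.Perm (α ⊕ β) //
        GeoS (Equiv.sumCongr γ₁ γ₂) π ∧ π (Sum.inl a₀) = Sum.inl a₀} =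
      Nat.card {p : Equiv.Perm α // GeoS γ₁ p ∧ p a₀ = a₀} *
        Nat.card {q : Equiv.Perm β // GeoS γ₂ q} := by
  rw [← Nat.card_prod]
  have key : ∀ pq : {p : Equiv.Perm α // GeoS γ₁ p ∧ p a₀ = a₀} × {q : Equiv.Perm β // GeoS γ₂ q},
      GeoS (Equiv.sumCongr γ₁ γ₂) (Equiv.sumCongr pq.1.1 pq.2.1) ∧
        (Equiv.sumCongr pq.1.1 pq.2.1) (Sum.inl a₀) = Sum.inl a₀ := by
    rintro ⟨⟨p, hp, hpf⟩, ⟨q, hq⟩⟩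
    exact ⟨(geoS_sumCongr_iff _ _ _ _).mpr ⟨hp, hq⟩, by simp [hpf]⟩
  refine (Nat.card_eq_of_bijective
    (fun pq => ⟨Equiv.sumCongr pq.1.1 pq.2.1, key pq⟩) ⟨?_, ?_⟩).symm
  · rintro ⟨⟨p, hp⟩, ⟨q, hq⟩⟩ ⟨⟨p', hp'⟩, ⟨q', hq'⟩⟩ h
    simp only [Subtype.mk.injEq] at h
    have h1 : p = p' := by
      ext x
      have := congrFun (congrArg (fun (π : Equiv.Perm (α ⊕ β)) => (π : α ⊕ β → α ⊕ β)) h)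
        (Sum.inl x)
      simpa using this
    have h2 : q = q' := by
      ext x
      have := congrFun (congrArg (fun (π : Equiv.Perm (α ⊕ β)) => (π : α ⊕ β → α ⊕ β)) h)
        (Sum.inr x)
      simpa using this
    simp [Prod.ext_iff, Subtype.ext_iff, h1, h2]
  · rintro ⟨π, hgeo, hfix⟩
    have horb := hgeo.orbit_le
    have hL : ∀ a, ∃ c, π (Sum.inl a) = Sum.inl c := by
      intro a
      have h1 : Equiv.Perm.SameCycle π (Sum.inl a) (π (Sum.inl a)) := ⟨1, by simp⟩
      have h2 := Setoid.le_def.mp horb h1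
      obtain ⟨c, hc, -⟩ := sameCycle_sumCongr_inl h2
      exact ⟨c, hc⟩
    have hR : ∀ b, ∃ c, π (Sum.inr b) = Sum.inr c := by
      intro b
      have h1 : Equiv.Perm.SameCycle π (Sum.inr b) (π (Sum.inr b)) := ⟨1, by simp⟩
      have h2 := Setoid.le_def.mp horb h1
      obtain ⟨c, hc, -⟩ := sameCycle_sumCongr_inr h2
      exact ⟨c, hc⟩
    obtain ⟨p, q, rfl⟩ := sum_decomp π hL hR
    obtain ⟨hp, hq⟩ := (geoS_sumCongr_iff _ _ _ _).mp hgeo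
    have hfix' : p a₀ = a₀ := by
      simpa using hfix
    exact ⟨⟨⟨p, hp, hfix'⟩, ⟨q, hq⟩⟩, rfl⟩

end ProdLemma
section Extension

open Equiv Equiv.Perm

/-- Extension of a permutation of `Fin m` to `Fin (m+1)` fixing `0`. -/
def pext {m : ℕ} (σ : Equiv.Perm (Fin m)) : Equiv.Perm (Fin (m + 1)) :=
  Equiv.Perm.decomposeFin.symm (0, σ)

@[simp] lemma pext_zero {m : ℕ} (σ : Equiv.Perm (Fin m)) : pext σ 0 = 0 :=
  Equiv.Perm.decomposeFin_symm_apply_zero 0 σ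

@[simp] lemma pext_succ {m : ℕ} (σ : Equiv.Perm (Fin m)) (x : Fin m) :
    pext σ x.succ = (σ x).succ := by
  rw [pext, Equiv.Perm.decomposeFin_symm_apply_succ]
  simp

lemma pext_mul {m : ℕ} (σ τ : Equiv.Perm (Fin m)) : pext σ * pext τ = pext (σ * τ) := by
  ext x
  refine Fin.cases ?_ (fun i => ?_) x <;> simp [Equiv.Perm.mul_apply]

lemma pext_one {m : ℕ} : pext (1 : Equiv.Perm (Fin m)) = 1 := by
  ext x
  refine Fin.cases ?_ (fun i => ?_) x <;> simp

lemma pext_inv {m : ℕ} (σ : Equiv.Perm (Fin m)) : (pext σ)⁻¹ = pext σ⁻¹ := by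
  rw [eq_comm, eq_inv_iff_mul_eq_one, pext_mul]
  simp [pext_one]

lemma pext_zpow {m : ℕ} (σ : Equiv.Perm (Fin m)) (k : ℤ) : (pext σ) ^ k = pext (σ ^ k) := by
  induction k using Int.induction_on with
  | zero => rw [zpow_zero, zpow_zero, pext_one]
  | succ k ih => rw [zpow_add_one, zpow_add_one, ih, pext_mul]
  | pred k ih => rw [zpow_sub_one, zpow_sub_one, ih, pext_inv, pext_mul]

lemma cS_one {α : Type*} [Fintype α] : cS (1 : Equiv.Perm α) = Fintype.card α := by
  have e : Quotient (orbitSetoid (1 : Equiv.Perm α)) ≃ α := by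
    refine Equiv.symm (Equiv.ofBijective (fun x => Quotient.mk _ x) ⟨?_, ?_⟩)
    · intro x y hxy
      obtain ⟨k, hk⟩ := Quotient.exact hxy
      simpa using hk
    · rintro ⟨x⟩; exact ⟨x, rfl⟩
  rw [cS, Nat.card_congr e, Nat.card_eq_fintype_card]

lemma lenS_one {α : Type*} [Fintype α] : lenS (1 : Equiv.Perm α) = 0 := by
  rw [lenS, cS_one]; ring

lemma cS_pext {m : ℕ} (σ : Equiv.Perm (Fin m)) : cS (pext σ) = cS σ + 1 := by
  have e : Quotient (orbitSetoid (pext σ)) ≃ Option (Quotient (orbitSetoid σ)) := by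
    refine
      { toFun := Quotient.lift
          (fun x => Fin.cases (motive := fun _ => Option (Quotient (orbitSetoid σ)))
            none (fun i => some (Quotient.mk _ i)) x) ?_
        invFun := Option.elim' (Quotient.mk _ 0)
          (Quotient.lift (fun i => Quotient.mk _ i.succ)
            (fun a b h => Quotient.sound (by
              obtain ⟨k, hk⟩ := h
              exact ⟨k, by rw [pext_zpow]; simp [hk]⟩)))
        left_inv := ?_
        right_inv := ?_ }
    · intro a b hab
      obtain ⟨k, hk⟩ := hab
      rw [pext_zpow] at hk
      revert hk
      refine Fin.cases ?_ (fun i => ?_) a <;> refine Fin.cases ?_ (fun j => ?_) b <;> intro hk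
      · rfl
      · rw [pext_zero] at hk; exact absurd hk (Fin.succ_ne_zero _).symm
      · rw [pext_succ] at hk; exact absurd hk (Fin.succ_ne_zero _)
      · rw [pext_succ] at hk
        exact congrArg some (Quotient.sound ⟨k, Fin.succ_injective _ hk⟩)
    · rintro ⟨x⟩
      refine Fin.cases ?_ (fun i => ?_) x <;> rfl
    · rintro (_ | b)
      · rfl
      · induction b using Quotient.ind; rfl
  rw [cS, Nat.card_congr e, Finite.card_option]
  rfl

lemma lenS_pext {m : ℕ} (σ : Equiv.Perm (Fin m)) : lenS (pext σ) = lenS σ := by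
  unfold lenS
  rw [cS_pext, Fintype.card_fin, Fintype.card_fin]
  push_cast
  ring

lemma finRotate_eq_swap_mul_pext (m : ℕ) :
    finRotate (m + 1) = Equiv.swap 0 1 * pext (finRotate m) := by
  rw [finRotate_succ_eq_decomposeFin]
  ext x
  refine Fin.cases ?_ (fun i => ?_) x
  · simp [pext]
  · rw [Equiv.Perm.decomposeFin_symm_apply_succ, Equiv.Perm.mul_apply, pext_succ]

/-- Key identity: pulling the extension through the full cycle. -/
lemma pext_inv_mul_rotate {m : ℕ} (σ : Equiv.Perm (Fin (m + 1))) :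
    (pext σ)⁻¹ * finRotate (m + 2) =
      Equiv.swap 0 ((σ⁻¹ 0).succ) * pext (σ⁻¹ * finRotate (m + 1)) := by
  rw [finRotate_eq_swap_mul_pext (m + 1), pext_inv, ← mul_assoc]
  have h : pext σ⁻¹ * Equiv.swap 0 1 =
      Equiv.swap 0 ((σ⁻¹ 0).succ) * pext σ⁻¹ := by
    have h2 := Equiv.swap_apply_apply (pext σ⁻¹) 0 (1 : Fin (m + 2))
    have h0 : pext σ⁻¹ 0 = 0 := pext_zero _
    have h1 : pext σ⁻¹ 1 = (σ⁻¹ 0).succ := by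
      have he : (1 : Fin (m + 2)) = (0 : Fin (m + 1)).succ := rfl
      rw [he, pext_succ]
    rw [h0, h1] at h2
    rw [h2]
    group
  rw [h, mul_assoc, pext_mul]

lemma cS_geo_rel {m : ℕ} (σ : Equiv.Perm (Fin (m + 1))) :
    cS ((pext σ)⁻¹ * finRotate (m + 2)) = cS (σ⁻¹ * finRotate (m + 1)) := by
  set t : Fin (m + 2) := (σ⁻¹ 0).succ with ht
  have htne : (0 : Fin (m + 2)) ≠ t := (Fin.succ_ne_zero _).symm
  set ρ : Equiv.Perm (Fin (m + 2)) := (pext σ)⁻¹ * finRotate (m + 2) with hρ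
  have hkey : ρ = Equiv.swap 0 t * pext (σ⁻¹ * finRotate (m + 1)) := pext_inv_mul_rotate σ
  have hρ0 : ρ 0 = t := by
    rw [hkey, Equiv.Perm.mul_apply, pext_zero, Equiv.swap_apply_left]
  have hsm : Equiv.swap 0 t * ρ = pext (σ⁻¹ * finRotate (m + 1)) := by
    rw [hkey, ← mul_assoc, Equiv.swap_mul_self, one_mul]
  have := cS_swap_mul (π := ρ) htne hρ0
  rw [hsm, cS_pext] at this
  omega

lemma lenS_pext_ratio {m : ℕ} (σ : Equiv.Perm (Fin (m + 1))) :
    lenS ((pext σ)⁻¹ * finRotate (m + 2)) = lenS (σ⁻¹ * finRotate (m + 1)) + 1 := by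
  unfold lenS
  rw [cS_geo_rel, Fintype.card_fin, Fintype.card_fin]
  push_cast
  ring

lemma lenS_finRotate_succ (m : ℕ) :
    lenS (finRotate (m + 2)) = lenS (finRotate (m + 1)) + 1 := by
  have h := lenS_pext_ratio (m := m) 1
  rw [pext_inv, inv_one, pext_one] at h
  simpa using h

lemma geoS_pext_iff {m : ℕ} (σ : Equiv.Perm (Fin (m + 1))) :
    GeoS (finRotate (m + 2)) (pext σ) ↔ GeoS (finRotate (m + 1)) σ := by
  unfold GeoS
  rw [lenS_pext, lenS_pext_ratio, lenS_finRotate_succ]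
  omega

lemma geoS_one {α : Type*} [Fintype α] (γ : Equiv.Perm α) : GeoS γ 1 := by
  unfold GeoS
  rw [lenS_one, inv_one, one_mul, zero_add]

/-- Lemma D: deleting the fixed point `0`. -/
lemma card_geo_fix (m : ℕ) :
    Nat.card {σ : Equiv.Perm (Fin (m + 1)) // GeoS (finRotate (m + 1)) σ ∧ σ 0 = 0} =
      Nat.card {σ : Equiv.Perm (Fin m) // GeoS (finRotate m) σ} := by
  have hsub1 : ∀ σ : Equiv.Perm (Fin 1), σ = 1 :=
    fun σ => Equiv.ext (fun x => Subsingleton.elim _ _)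
  rcases m with - | m
  · have hl : Unique {σ : Equiv.Perm (Fin 1) // GeoS (finRotate 1) σ ∧ σ 0 = 0} := by
      refine ⟨⟨⟨1, geoS_one _, rfl⟩⟩, ?_⟩
      rintro ⟨σ, hσ⟩
      exact Subtype.ext (hsub1 σ)
    have hr : Unique {σ : Equiv.Perm (Fin 0) // GeoS (finRotate 0) σ} := by
      refine ⟨⟨⟨1, geoS_one _⟩⟩, ?_⟩
      rintro ⟨σ, hσ⟩
      exact Subtype.ext (Equiv.ext (fun x => x.elim0))
    rw [Nat.card_unique, Nat.card_unique]
  · refine (Nat.card_eq_of_bijective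
      (fun σ' => ⟨pext σ'.1, (geoS_pext_iff σ'.1).mpr σ'.2, pext_zero _⟩) ⟨?_, ?_⟩).symm
    · rintro ⟨p, hp⟩ ⟨q, hq⟩ h
      simp only [Subtype.mk.injEq] at h
      refine Subtype.ext (Equiv.ext (fun x => ?_))
      have := congrFun
        (congrArg (fun (π : Equiv.Perm (Fin (m + 2))) => (π : Fin (m + 2) → Fin (m + 2))) h)
        x.succ
      simp only [pext_succ] at this
      exact Fin.succ_injective _ this
    · rintro ⟨σ, hgeo, hfix⟩
      obtain ⟨⟨p, σ'⟩, hps⟩ := Equiv.Perm.decomposeFin.symm.surjective σ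
      have hp0 : p = 0 := by
        rw [← hps, Equiv.Perm.decomposeFin_symm_apply_zero] at hfix
        exact hfix
      have hdec : σ = pext σ' := by rw [← hps, hp0]; rfl
      exact ⟨⟨σ', (geoS_pext_iff σ').mp (hdec ▸ hgeo)⟩, Subtype.ext hdec.symm⟩

end Extension
section Fiber

open Equiv Equiv.Perm

lemma lenS_finRotate : ∀ m : ℕ, lenS (finRotate (m + 1)) = m := by
  intro m
  induction m with
  | zero => rw [finRotate_one]; exact lenS_one
  | succ m ih => rw [lenS_finRotate_succ, ih]; push_cast; ring

lemma swap_permCongr {α β : Type*} [DecidableEq α] [DecidableEq β] (e : α ≃ β) (u v : α) :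
    Equiv.permCongr e (Equiv.swap u v) = Equiv.swap (e u) (e v) := by
  ext x
  rw [Equiv.permCongr_apply]
  by_cases h1 : x = e u
  · simp [h1]
  · by_cases h2 : x = e v
    · simp [h2]
    · have h1' : e.symm x ≠ u := fun hc => h1 (by rw [← hc]; simp)
      have h2' : e.symm x ≠ v := fun hc => h2 (by rw [← hc]; simp)
      rw [Equiv.swap_apply_of_ne_of_ne h1' h2', Equiv.swap_apply_of_ne_of_ne h1 h2]
      simp

lemma gamma_split {a b n : ℕ} (h : (a + 1) + (b + 1) = n + 1) (k : Fin (n + 1))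
    (hk : (k : ℕ) = a + 1) :
    Equiv.permCongr (finSumFinEquiv.trans (finCongr h))
        (Equiv.sumCongr (finRotate (a + 1)) (finRotate (b + 1))) =
      Equiv.swap 0 k * finRotate (n + 1) := by
  have hab : n = a + b + 1 := by omega
  set E : Fin (a + 1) ⊕ Fin (b + 1) ≃ Fin (n + 1) := finSumFinEquiv.trans (finCongr h) with hE
  have hEl : ∀ i : Fin (a + 1), ((E (Sum.inl i)) : ℕ) = (i : ℕ) := by
    intro i; simp [hE]
  have hEr : ∀ j : Fin (b + 1), ((E (Sum.inr j)) : ℕ) = a + 1 + (j : ℕ) := by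
    intro j; simp [hE]
  apply Equiv.ext
  intro x
  obtain ⟨s, rfl⟩ := E.surjective x
  rw [Equiv.permCongr_apply, Equiv.symm_apply_apply, Equiv.Perm.mul_apply, finRotate_succ_apply]
  rcases s with i | j
  · simp only [Equiv.sumCongr_apply, Sum.map_inl, finRotate_succ_apply]
    by_cases hi : (i : ℕ) = a
    · have h1 : E (Sum.inl i) + 1 = k := by
        rw [Fin.ext_iff, Fin.val_add_one]
        have : ¬ E (Sum.inl i) = Fin.last n := by
          rw [Fin.ext_iff, hEl, Fin.val_last, hi]; omega
        rw [if_neg this, hEl, hi, hk]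
      rw [h1, Equiv.swap_apply_right]
      have h2 : i + 1 = 0 := by
        rw [Fin.ext_iff, Fin.val_add_one]
        have : i = Fin.last a := by rw [Fin.ext_iff, Fin.val_last]; exact hi
        rw [if_pos this]; rfl
      rw [h2, Fin.ext_iff, hEl]
      rfl
    · have hiv : (i : ℕ) < a := by have := i.isLt; omega
      have h1 : ((E (Sum.inl i) + 1 : Fin (n + 1)) : ℕ) = (i : ℕ) + 1 := by
        rw [Fin.val_add_one]
        have : ¬ E (Sum.inl i) = Fin.last n := by
          rw [Fin.ext_iff, hEl, Fin.val_last]; omega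
        rw [if_neg this, hEl]
      rw [Equiv.swap_apply_of_ne_of_ne, Fin.ext_iff, hEl, h1]
      · rw [Fin.val_add_one]
        have : ¬ i = Fin.last a := by rw [Fin.ext_iff, Fin.val_last]; omega
        rw [if_neg this]
      · rw [Ne, Fin.ext_iff, h1, Fin.val_zero]; omega
      · rw [Ne, Fin.ext_iff, h1, hk]; omega
  · simp only [Equiv.sumCongr_apply, Sum.map_inr, finRotate_succ_apply]
    by_cases hj : (j : ℕ) = b
    · have h1 : E (Sum.inr j) = Fin.last n := by
        rw [Fin.ext_iff, hEr, Fin.val_last]; omega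
      have h2 : E (Sum.inr j) + 1 = 0 := by
        rw [Fin.ext_iff, Fin.val_add_one, if_pos h1]; rfl
      rw [h2, Equiv.swap_apply_left]
      have h3 : j + 1 = 0 := by
        rw [Fin.ext_iff, Fin.val_add_one]
        have : j = Fin.last b := by rw [Fin.ext_iff, Fin.val_last]; exact hj
        rw [if_pos this]; rfl
      rw [h3, Fin.ext_iff, hEr, hk]
      rfl
    · have hjv : (j : ℕ) < b := by have := j.isLt; omega
      have h1 : ((E (Sum.inr j) + 1 : Fin (n + 1)) : ℕ) = a + 1 + (j : ℕ) + 1 := by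
        rw [Fin.val_add_one]
        have : ¬ E (Sum.inr j) = Fin.last n := by
          rw [Fin.ext_iff, hEr, Fin.val_last]; omega
        rw [if_neg this, hEr]
      rw [Equiv.swap_apply_of_ne_of_ne, Fin.ext_iff, hEr, h1]
      · rw [Fin.val_add_one]
        have : ¬ j = Fin.last b := by rw [Fin.ext_iff, Fin.val_last]; omega
        rw [if_neg this]
        omega
      · rw [Ne, Fin.ext_iff, h1, Fin.val_zero]; omega
      · rw [Ne, Fin.ext_iff, h1, hk]; omega

lemma card_geo_swap_twist {n : ℕ} (k : Fin (n + 1)) (hk : k ≠ 0)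
    (hlen : lenS (Equiv.swap 0 k * finRotate (n + 1)) = lenS (finRotate (n + 1)) - 1) :
    Nat.card {π : Equiv.Perm (Fin (n + 1)) // GeoS (finRotate (n + 1)) π ∧ π 0 = k} =
      Nat.card {π : Equiv.Perm (Fin (n + 1)) //
        GeoS (Equiv.swap 0 k * finRotate (n + 1)) π ∧ π 0 = 0} := by
  refine Nat.card_congr (Equiv.subtypeEquiv (Equiv.mulLeft (Equiv.swap 0 k)) (fun π => ?_))
  have happ : ∀ x, (Equiv.mulLeft (Equiv.swap 0 k) π) x = Equiv.swap 0 k (π x) := fun x => rfl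
  have hpt : π 0 = k ↔ Equiv.swap 0 k (π 0) = 0 := by
    constructor
    · intro h; rw [h, Equiv.swap_apply_right]
    · intro h
      have := congrArg (Equiv.swap 0 k) h
      rw [Equiv.swap_apply_self, Equiv.swap_apply_left] at this
      exact this
  constructor
  · rintro ⟨hgeo, hfix⟩
    have hcs := cS_swap_mul (π := π) (Ne.symm hk) hfix
    have hlenπ : lenS (Equiv.swap 0 k * π) = lenS π - 1 := by
      unfold lenS at *; rw [hcs]; push_cast; ring
    refine ⟨?_, (happ 0) ▸ (hpt.mp hfix)⟩
    unfold GeoS at hgeo ⊢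
    have hinv : (Equiv.mulLeft (Equiv.swap 0 k) π)⁻¹ * (Equiv.swap 0 k * finRotate (n + 1)) =
        π⁻¹ * finRotate (n + 1) := by
      have : Equiv.mulLeft (Equiv.swap 0 k) π = Equiv.swap 0 k * π := rfl
      rw [this, mul_inv_rev, mul_assoc, ← mul_assoc (Equiv.swap 0 k)⁻¹,
        inv_mul_cancel, one_mul]
    rw [hinv, hlen]
    have : lenS (Equiv.mulLeft (Equiv.swap 0 k) π) = lenS π - 1 := hlenπ
    rw [this]
    omega
  · rintro ⟨hgeo, hfix⟩
    rw [happ 0] at hfix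
    have hfix' : π 0 = k := hpt.mpr hfix
    have hcs := cS_swap_mul (π := π) (Ne.symm hk) hfix'
    have hlenπ : lenS (Equiv.swap 0 k * π) = lenS π - 1 := by
      unfold lenS at *; rw [hcs]; push_cast; ring
    refine ⟨?_, hfix'⟩
    unfold GeoS at hgeo ⊢
    have hinv : (Equiv.mulLeft (Equiv.swap 0 k) π)⁻¹ * (Equiv.swap 0 k * finRotate (n + 1)) =
        π⁻¹ * finRotate (n + 1) := by
      have : Equiv.mulLeft (Equiv.swap 0 k) π = Equiv.swap 0 k * π := rfl
      rw [this, mul_inv_rev, mul_assoc, ← mul_assoc (Equiv.swap 0 k)⁻¹,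
        inv_mul_cancel, one_mul]
    rw [hinv, hlen] at hgeo
    have h2 : lenS (Equiv.mulLeft (Equiv.swap 0 k) π) = lenS π - 1 := hlenπ
    rw [h2] at hgeo
    omega

end Fiber
section Master

open Equiv Equiv.Perm

/-- The number of geodesic (non-crossing) permutations of `{1,…,n}`. -/
noncomputable def geoCard (n : ℕ) : ℕ :=
  Nat.card {π : Equiv.Perm (Fin n) // GeoS (finRotate n) π}

lemma nat_card_sigma {ι : Type*} [Fintype ι] (f : ι → Type*) [∀ i, Finite (f i)] :
    Nat.card (Σ i, f i) = ∑ i, Nat.card (f i) := by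
  classical
  letI : ∀ i, Fintype (f i) := fun i => Fintype.ofFinite _
  simp [Nat.card_eq_fintype_card, Fintype.card_sigma]

lemma card_partition (n : ℕ) (P : Equiv.Perm (Fin (n + 1)) → Prop) :
    Nat.card {π : Equiv.Perm (Fin (n + 1)) // P π} =
      ∑ k : Fin (n + 1), Nat.card {π : Equiv.Perm (Fin (n + 1)) // P π ∧ π 0 = k} := by
  classical
  rw [← nat_card_sigma (fun k : Fin (n + 1) =>
    {π : Equiv.Perm (Fin (n + 1)) // P π ∧ π 0 = k})]
  refine (Nat.card_congr ?_).symm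
  refine Equiv.trans (Equiv.sigmaCongrRight (fun k =>
    (Equiv.subtypeSubtypeEquivSubtypeInter P (fun π => π 0 = k)).symm)) ?_
  exact Equiv.sigmaFiberEquiv (fun x : {π : Equiv.Perm (Fin (n + 1)) // P π} => x.1 0)

lemma fiber_card {n : ℕ} (k : Fin (n + 1)) (hk : k ≠ 0) :
    Nat.card {π : Equiv.Perm (Fin (n + 1)) // GeoS (finRotate (n + 1)) π ∧ π 0 = k} =
      geoCard ((k : ℕ) - 1) * geoCard (n + 1 - (k : ℕ)) := by
  have hk0 : (k : ℕ) ≠ 0 := fun hc => hk (Fin.ext (by simpa using hc))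
  have hk1 : 1 ≤ (k : ℕ) := Nat.one_le_iff_ne_zero.mpr hk0
  have hkn : (k : ℕ) ≤ n := Nat.lt_succ_iff.mp k.isLt
  set a := (k : ℕ) - 1 with ha
  set b := n - (k : ℕ) with hb
  have h : (a + 1) + (b + 1) = n + 1 := by omega
  have hkv : (k : ℕ) = a + 1 := by omega
  set E : Fin (a + 1) ⊕ Fin (b + 1) ≃ Fin (n + 1) := finSumFinEquiv.trans (finCongr h) with hE
  have hsplit := gamma_split h k hkv
  have hlen : lenS (Equiv.swap 0 k * finRotate (n + 1)) = lenS (finRotate (n + 1)) - 1 := by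
    rw [← hsplit, lenS_permCongr, lenS_sumCongr, lenS_finRotate, lenS_finRotate, lenS_finRotate]
    push_cast
    omega
  rw [card_geo_swap_twist k hk hlen]
  have hE0 : E (Sum.inl 0) = 0 := by
    rw [Fin.ext_iff]
    simp [hE]
  have hEs0 : E.symm 0 = Sum.inl 0 := by rw [← hE0, Equiv.symm_apply_apply]
  have step2 : Nat.card {π : Equiv.Perm (Fin (n + 1)) //
        GeoS (Equiv.swap 0 k * finRotate (n + 1)) π ∧ π 0 = 0} =
      Nat.card {ρ : Equiv.Perm (Fin (a + 1) ⊕ Fin (b + 1)) //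
        GeoS (Equiv.sumCongr (finRotate (a + 1)) (finRotate (b + 1))) ρ ∧
          ρ (Sum.inl 0) = Sum.inl 0} := by
    refine (Nat.card_congr (Equiv.subtypeEquiv (Equiv.permCongr E) (fun ρ => ?_))).symm
    constructor
    · rintro ⟨hg, hf⟩
      refine ⟨?_, ?_⟩
      · rw [← hsplit]
        exact (geoS_permCongr E _ ρ).mpr hg
      · show (E.permCongr ρ) 0 = 0
        rw [Equiv.permCongr_apply, hEs0, hf, hE0]
    · rintro ⟨hg, hf⟩
      rw [← hsplit] at hg
      refine ⟨(geoS_permCongr E _ ρ).mp hg, ?_⟩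
      have hf' : (E.permCongr ρ) 0 = 0 := hf
      rw [Equiv.permCongr_apply, hEs0] at hf'
      rw [← hE0] at hf'
      exact E.injective hf'
  rw [step2, card_geo_sum (finRotate (a + 1)) (finRotate (b + 1)) (0 : Fin (a + 1)),
    card_geo_fix a]
  have hfst : Nat.card {σ : Equiv.Perm (Fin a) // GeoS (finRotate a) σ} = geoCard a := rfl
  have hsnd : Nat.card {q : Equiv.Perm (Fin (b + 1)) // GeoS (finRotate (b + 1)) q} =
      geoCard (b + 1) := rfl
  rw [hfst, hsnd]
  have hb1 : b + 1 = n + 1 - (k : ℕ) := by omega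
  have ha1 : a = (k : ℕ) - 1 := ha
  rw [hb1, ha1]

lemma geoCard_succ (n : ℕ) :
    geoCard (n + 1) = geoCard n + ∑ i : Fin n, geoCard (i : ℕ) * geoCard (n - (i : ℕ)) := by
  rw [geoCard, card_partition n (GeoS (finRotate (n + 1))), Fin.sum_univ_succ]
  rw [card_geo_fix n]
  congr 1
  refine Finset.sum_congr rfl (fun i _ => ?_)
  rw [fiber_card i.succ (Fin.succ_ne_zero i)]
  have h1 : ((i.succ : Fin (n + 1)) : ℕ) = (i : ℕ) + 1 := rfl
  have h2 : (i : ℕ) + 1 - 1 = (i : ℕ) := rfl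
  have h3 : n + 1 - ((i : ℕ) + 1) = n - (i : ℕ) := by omega
  rw [h1, h2, h3]

lemma geoCard_zero : geoCard 0 = 1 := by
  have hr : Unique {σ : Equiv.Perm (Fin 0) // GeoS (finRotate 0) σ} := by
    refine ⟨⟨⟨1, geoS_one _⟩⟩, ?_⟩
    rintro ⟨σ, hσ⟩
    exact Subtype.ext (Equiv.ext (fun x => x.elim0))
  rw [geoCard, Nat.card_unique]

theorem geoCard_eq_catalan (n : ℕ) : geoCard n = catalan n := by
  induction n using Nat.strong_induction_on with
  | _ n ih =>
    rcases n with - | n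
    · rw [geoCard_zero, catalan_zero]
    · rw [geoCard_succ, catalan_succ]
      rw [Fin.sum_univ_castSucc (n := n)
        (f := fun i : Fin (n + 1) => catalan (i : ℕ) * catalan (n - (i : ℕ)))]
      have hlast : catalan ((Fin.last n : Fin (n + 1)) : ℕ) *
          catalan (n - ((Fin.last n : Fin (n + 1)) : ℕ)) = catalan n := by
        rw [Fin.val_last, Nat.sub_self, catalan_zero, mul_one]
      rw [hlast, ih n (Nat.lt_succ_self n), add_comm]
      congr 1
      refine Finset.sum_congr rfl (fun i _ => ?_)
      have h1 : ((i.castSucc : Fin (n + 1)) : ℕ) = (i : ℕ) := rfl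
      rw [h1, ih (i : ℕ) (by omega), ih (n - (i : ℕ)) (by omega)]

end Master
/-- A partitioned permutation: a pair `(𝒱, π)` with `𝒱` a partition of `{1,…,n}`
(encoded as a setoid on `Fin n`) coarser than the orbit partition of `π`. -/
structure PartitionedPerm (n : ℕ) where
  part : Setoid (Fin n)
  perm : Equiv.Perm (Fin n)
  hle : orbitSetoid perm ≤ part

/-- The length `|(𝒱,π)| := 2|𝒱| − |π|` of a partitioned permutation. -/
noncomputable def ppLen {n : ℕ} (a : PartitionedPerm n) : ℤ :=
  2 * pLen a.part - permLen a.perm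

/-- The product of partitioned permutations: `(𝒱,π)·(𝒲,σ) = (𝒱∨𝒲, πσ)` if the
lengths add up, and `0` (here: `none`) otherwise. -/
noncomputable def ppMul {n : ℕ} (a b : PartitionedPerm n) : Option (PartitionedPerm n) :=
  if ppLen a + ppLen b = 2 * pLen (a.part ⊔ b.part) - permLen (a.perm * b.perm)
  then some ⟨a.part ⊔ b.part, a.perm * b.perm,
        le_trans (orbitSetoid_mul_le a.perm b.perm) (sup_le_sup a.hle b.hle)⟩
  else none

/-- The full cycle `γ_n = (1,2,…,n)`. -/
def gammaCycle (n : ℕ) : Equiv.Perm (Fin n) := finRotate n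

/-- The permutation `γ_{m,n} = (1,…,m)(m+1,…,m+n)` consisting of two full cycles. -/
def gammaTwo (m n : ℕ) : Equiv.Perm (Fin (m + n)) :=
  (Equiv.permCongr finSumFinEquiv) (Equiv.sumCongr (finRotate m) (finRotate n))

/-- The partitioned permutation `(1_n, γ_n)`. -/
noncomputable def topGamma (n : ℕ) : PartitionedPerm n :=
  ⟨⊤, gammaCycle n, le_top⟩

/-- The partitioned permutation `(1_{m+n}, γ_{m,n})`. -/
noncomputable def topGammaTwo (m n : ℕ) : PartitionedPerm (m + n) :=
  ⟨⊤, gammaTwo m n, le_top⟩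

/-- `π` is a non-crossing permutation of `{1,…,n}`: `|π| + |π⁻¹γ_n| = n − 1`. -/
def IsNC {n : ℕ} (π : Equiv.Perm (Fin n)) : Prop :=
  permLen π + permLen (π⁻¹ * gammaCycle n) = (n : ℤ) - 1

section Final

open Equiv Equiv.Perm

lemma pLen_orbit {n : ℕ} (π : Equiv.Perm (Fin n)) : pLen (orbitSetoid π) = permLen π := rfl

lemma permLen_eq_lenS {n : ℕ} (π : Equiv.Perm (Fin n)) : permLen π = lenS π := by
  rw [permLen, lenS, Fintype.card_fin]
  rfl

lemma pLen_top {n : ℕ} (hn : 1 ≤ n) : pLen (⊤ : Setoid (Fin n)) = (n : ℤ) - 1 := by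
  have hu : Unique (Quotient (⊤ : Setoid (Fin n))) := by
    refine ⟨⟨Quotient.mk _ ⟨0, hn⟩⟩, ?_⟩
    rintro ⟨x⟩
    exact Quotient.sound trivial
  rw [pLen, Nat.card_unique]
  push_cast
  ring

lemma orbit_gamma_top {n : ℕ} (hn : 1 ≤ n) :
    orbitSetoid (gammaCycle n) = (⊤ : Setoid (Fin n)) := by
  obtain ⟨m, rfl⟩ : ∃ m, n = m + 1 := ⟨n - 1, by omega⟩
  have hcS : cS (finRotate (m + 1)) = 1 := by
    have := lenS_finRotate m
    unfold lenS at this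
    rw [Fintype.card_fin] at this
    omega
  refine setoid_eq_of_le_of_card le_top ?_
  have h2 : Nat.card (Quotient (orbitSetoid (gammaCycle (m + 1)))) = 1 := by
    show cS (gammaCycle (m + 1)) = 1
    rw [gammaCycle]
    exact hcS
  rw [h2]
  have : Nonempty (Quotient (⊤ : Setoid (Fin (m + 1)))) := ⟨Quotient.mk _ 0⟩
  have : Finite (Quotient (⊤ : Setoid (Fin (m + 1)))) := Quotient.finite _
  exact Nat.card_pos

lemma permLen_gamma {n : ℕ} (hn : 1 ≤ n) : permLen (gammaCycle n) = (n : ℤ) - 1 := by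
  obtain ⟨m, rfl⟩ : ∃ m, n = m + 1 := ⟨n - 1, by omega⟩
  rw [permLen_eq_lenS, gammaCycle, lenS_finRotate]
  push_cast
  ring

lemma isNC_iff_geoS {n : ℕ} (hn : 1 ≤ n) (π : Equiv.Perm (Fin n)) :
    IsNC π ↔ GeoS (finRotate n) π := by
  rw [IsNC, GeoS, permLen_eq_lenS, permLen_eq_lenS]
  have h1 : lenS (finRotate n) = (n : ℤ) - 1 := by
    have := permLen_gamma hn
    rw [permLen_eq_lenS] at this
    exact this
  rw [h1, gammaCycle]

lemma PartitionedPerm.ext' {n : ℕ} {x y : PartitionedPerm n} (h1 : x.part = y.part)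
    (h2 : x.perm = y.perm) : x = y := by
  cases x; cases y
  cases h1; cases h2
  rfl

lemma card_pairs_eq {n : ℕ} (hn : 1 ≤ n) :
    Nat.card {p : PartitionedPerm n × PartitionedPerm n //
        ppMul p.1 p.2 = some (topGamma n) ∧
        p.1.part = orbitSetoid p.1.perm ∧ p.2.part = orbitSetoid p.2.perm} =
      Nat.card {π : Equiv.Perm (Fin n) // IsNC π} := by
  refine (Nat.card_eq_of_bijective (fun x => ?_) ⟨?_, ?_⟩).symm
  · -- forward map from NC perms to pairs
    obtain ⟨π, hπ⟩ := x
    refine ⟨(⟨orbitSetoid π, π, le_refl _⟩,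
             ⟨orbitSetoid (π⁻¹ * gammaCycle n), π⁻¹ * gammaCycle n, le_refl _⟩), ?_, rfl, rfl⟩
    have hgeo : GeoS (finRotate n) π := (isNC_iff_geoS hn π).mp hπ
    have hsup : orbitSetoid π ⊔ orbitSetoid (π⁻¹ * gammaCycle n) = ⊤ := by
      have h1 := hgeo.orbit_sup
      exact h1.trans (orbit_gamma_top hn)
    have hperm : π * (π⁻¹ * gammaCycle n) = gammaCycle n := by
      rw [mul_inv_cancel_left]
    have hcond : ppLen ⟨orbitSetoid π, π, le_refl _⟩ +
        ppLen ⟨orbitSetoid (π⁻¹ * gammaCycle n), π⁻¹ * gammaCycle n, le_refl _⟩ =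
        2 * pLen (orbitSetoid π ⊔ orbitSetoid (π⁻¹ * gammaCycle n)) -
          permLen (π * (π⁻¹ * gammaCycle n)) := by
      rw [hsup, hperm, pLen_top hn, permLen_gamma hn]
      show 2 * pLen (orbitSetoid π) - permLen π +
          (2 * pLen (orbitSetoid (π⁻¹ * gammaCycle n)) - permLen (π⁻¹ * gammaCycle n)) = _
      rw [pLen_orbit, pLen_orbit]
      have := hπ
      rw [IsNC] at this
      omega
    rw [ppMul, if_pos hcond]
    congr 1
    refine PartitionedPerm.ext' ?_ ?_
    · exact hsup
    · exact hperm
  · -- injective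
    rintro ⟨π, hπ⟩ ⟨π', hπ'⟩ h
    have h' := congrArg (fun z => (z.val.1).perm) h
    exact Subtype.ext h'
  · -- surjective
    rintro ⟨⟨A, B⟩, hmul, hA, hB⟩
    rw [ppMul] at hmul
    split_ifs at hmul with hcond
    · have hinj := Option.some_injective _ hmul
      have hpart : A.part ⊔ B.part = ⊤ := congrArg PartitionedPerm.part hinj
      have hperm : A.perm * B.perm = gammaCycle n := congrArg PartitionedPerm.perm hinj
      have hBperm : B.perm = A.perm⁻¹ * gammaCycle n := by
        rw [← hperm, inv_mul_cancel_left]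
      have hNC : IsNC A.perm := by
        rw [IsNC]
        have hcond' := hcond
        rw [hpart, hperm, pLen_top hn, permLen_gamma hn] at hcond'
        have hlA : ppLen A = permLen A.perm := by
          rw [ppLen, hA, pLen_orbit]; ring
        have hlB : ppLen B = permLen B.perm := by
          rw [ppLen, hB, pLen_orbit]; ring
        rw [hlA, hlB, hBperm] at hcond'
        omega
      refine ⟨⟨A.perm, hNC⟩, ?_⟩
      refine Subtype.ext ?_
      refine Prod.ext ?_ ?_
      · show (⟨orbitSetoid A.perm, A.perm, le_refl _⟩ : PartitionedPerm n) = A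
        exact PartitionedPerm.ext' hA.symm rfl
      · show (⟨orbitSetoid (A.perm⁻¹ * gammaCycle n), A.perm⁻¹ * gammaCycle n,
            le_refl _⟩ : PartitionedPerm n) = B
        refine PartitionedPerm.ext' ?_ hBperm.symm
        rw [hB, hBperm]

lemma card_isNC_eq_catalan {n : ℕ} (hn : 1 ≤ n) :
    Nat.card {π : Equiv.Perm (Fin n) // IsNC π} = catalan n := by
  rw [← geoCard_eq_catalan, geoCard]
  exact Nat.card_congr (Equiv.subtypeEquivRight (fun π => isNC_iff_geoS hn π))

end Final

/-- `(ζ∗ζ)`(1_n, γ_n)`, the number of factorizations of `(1_n,γ_n)` into a product of two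
disc partitioned permutations, equals the number of non-crossing permutations of
`{1,…,n}`, which is the `n`-th Catalan number `C_n = (1/(n+1))·binom(2n,n)`. -/
theorem zeta_conv_zeta_topGamma (n : ℕ) (hn : 1 ≤ n) :
    Nat.card {p : PartitionedPerm n × PartitionedPerm n //
        ppMul p.1 p.2 = some (topGamma n) ∧
        p.1.part = orbitSetoid p.1.perm ∧ p.2.part = orbitSetoid p.2.perm} = catalan n ∧
      Nat.card {π : Equiv.Perm (Fin n) // IsNC π} = catalan n := by
  constructor
  · rw [card_pairs_eq hn, card_isNC_eq_catalan hn]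
  · exact card_isNC_eq_catalan hn
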